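/- arXiv:1805.08114 — 3 statements merged into one kernel-verified Lean document; each statement's English description precedes it below -/
import Mathlib

section
/- Let f : ℝ^d → ℝ be M-smooth, L-Lipschitz, and bounded from below. Consider SGD iterates x_{t+1} = x_t − η_t g_t, where g_t = g(x_t, ξ_t) are stochastic gradients satisfying E_t[g_t] = ∇f(x_t) and bounded noise ‖g_t − ∇f(x_t)‖ ≤ S almost surely, with the global generalized AdaGrad stepsizes η_t = α / (β + Σ_{i=1}^{t−1} ‖g_i‖²)^{1/2+ε}, α, β > 0 and ε ∈ (0, 1/2]. Then liminf_{t→∞} ‖∇f(x_t)‖² · t^{1/2−ε} = 0 almost surely. -/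
open MeasureTheory Filter Real

section Aux

variable {E : Type*} [NormedAddCommGroup E] [InnerProductSpace ℝ E] [CompleteSpace E]

lemma inner_gradient_apply' (f : E → ℝ) (y v : E) :
    @inner ℝ _ _ (gradient f y) v = fderiv ℝ f y v := by
  rw [gradient, InnerProductSpace.toDual_symm_apply]

lemma norm_gradient_le_of_lip' {f : E → ℝ} {L : ℝ} (hL : 0 ≤ L)
    (hlip : ∀ y z, |f y - f z| ≤ L * ‖y - z‖) (y : E) : ‖gradient f y‖ ≤ L := by
  have hlw : LipschitzWith L.toNNReal f := by
    refine LipschitzWith.of_dist_le_mul fun a b => ?_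
    rw [Real.dist_eq, dist_eq_norm]
    simpa [Real.coe_toNNReal L hL] using hlip a b
  have h1 : ‖fderiv ℝ f y‖ ≤ L := by
    simpa [Real.coe_toNNReal L hL] using norm_fderiv_le_of_lipschitz ℝ hlw (x₀ := y)
  calc ‖gradient f y‖ = ‖fderiv ℝ f y‖ := (LinearIsometryEquiv.norm_map _ _)
    _ ≤ L := h1

lemma descent_lemma' {f : E → ℝ} {M : ℝ} (hM : 0 ≤ M) (hdiff : Differentiable ℝ f)
    (hsm : ∀ y z, ‖gradient f y - gradient f z‖ ≤ M * ‖y - z‖) (p v : E) :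
    f (p + v) ≤ f p + @inner ℝ _ _ (gradient f p) v + M * ‖v‖ ^ 2 := by
  set c : ℝ := @inner ℝ _ _ (gradient f p) v with hc
  set φ : ℝ → ℝ := fun t => f (p + t • v) - t * c with hφ
  have key : ‖φ 1 - φ 0‖ ≤ M * ‖v‖ ^ 2 := by
    apply norm_image_sub_le_of_norm_deriv_le_segment_01'
      (f' := fun t => (@inner ℝ _ _ (gradient f (p + t • v)) v) - c)
    · intro t _
      have hcurve : HasDerivAt (fun t : ℝ => p + t • v) v t := by
        simpa using ((hasDerivAt_id t).smul_const v).const_add p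
      have h1 : HasDerivAt (fun s : ℝ => f (p + s • v)) (fderiv ℝ f (p + t • v) v) t :=
        (hdiff (p + t • v)).hasFDerivAt.comp_hasDerivAt t hcurve
      have h2 : HasDerivAt (fun s : ℝ => s * c) c t := by
        simpa using (hasDerivAt_id t).mul_const c
      have h3 := h1.sub h2
      rw [← inner_gradient_apply'] at h3
      exact h3.hasDerivWithinAt
    · intro t ht
      rw [← inner_sub_left]
      calc ‖@inner ℝ _ _ (gradient f (p + t • v) - gradient f p) v‖
          ≤ ‖gradient f (p + t • v) - gradient f p‖ * ‖v‖ := norm_inner_le_norm _ _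
        _ ≤ (M * ‖(p + t • v) - p‖) * ‖v‖ := by
            gcongr
            exact hsm _ _
        _ = M * (|t| * ‖v‖) * ‖v‖ := by rw [add_sub_cancel_left, norm_smul, Real.norm_eq_abs]
        _ ≤ M * (1 * ‖v‖) * ‖v‖ := by
            have h01 : |t| ≤ 1 := by
              rw [abs_le]; exact ⟨le_trans (by norm_num) ht.1, ht.2.le⟩
            gcongr
        _ = M * ‖v‖ ^ 2 := by ring
  have h10 : φ 1 - φ 0 ≤ M * ‖v‖ ^ 2 := le_trans (le_abs_self _) key
  have e1 : φ 1 = f (p + v) - c := by simp [hφ]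
  have e0 : φ 0 = f p := by simp [hφ]
  rw [e1, e0] at h10
  linarith

end Aux

/-- one-step inequality: for `0 < u ≤ v`, `(v-u) * v^(-(1+q)) ≤ (u^(-q) - v^(-q))/q`. -/
lemma rpow_step' {u v q : ℝ} (hq : 0 < q) (hu : 0 < u) (huv : u ≤ v) :
    (v - u) * v ^ (-(1 + q)) ≤ (u ^ (-q) - v ^ (-q)) / q := by
  have hv : 0 < v := lt_of_lt_of_le hu huv
  have hne : (0:ℝ) ∉ Set.uIcc u v := by
    rw [Set.uIcc_of_le huv]
    intro h
    exact absurd h.1 (not_le.2 hu)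
  have hInt : ∫ s in u..v, s ^ (-(1 + q)) =
      (v ^ (-q) - u ^ (-q)) / (-q) := by
    rw [integral_rpow (Or.inr ⟨by intro h; apply hq.ne'; linarith [neg_eq_iff_eq_neg.mp h], hne⟩)]
    norm_num
  have hcont : ContinuousOn (fun s : ℝ => s ^ (-(1 + q))) (Set.uIcc u v) := by
    intro s hs
    rw [Set.uIcc_of_le huv] at hs
    exact (Real.continuousAt_rpow_const s _ (Or.inl (lt_of_lt_of_le hu hs.1).ne')).continuousWithinAt
  have hmono : (v - u) * v ^ (-(1 + q)) ≤ ∫ s in u..v, s ^ (-(1 + q)) := by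
    have hconst : ∫ _ in u..v, v ^ (-(1 + q)) = (v - u) * v ^ (-(1 + q)) := by
      simp [intervalIntegral.integral_const, smul_eq_mul]
    rw [← hconst]
    apply intervalIntegral.integral_mono_on huv (intervalIntegrable_const)
      (hcont.intervalIntegrable)
    intro s hs
    exact Real.rpow_le_rpow_of_nonpos (lt_of_lt_of_le hu hs.1) hs.2 (by linarith)
  rw [hInt] at hmono
  calc (v - u) * v ^ (-(1 + q)) ≤ (v ^ (-q) - u ^ (-q)) / (-q) := hmono
    _ = (u ^ (-q) - v ^ (-q)) / q := by ring

lemma aux_series' {β K q : ℝ} (hβ : 0 < β) (hK : 0 ≤ K) (hq : 0 < q) (a : ℕ → ℝ)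
    (ha0 : ∀ t, 0 ≤ a t) (haK : ∀ t, a t ≤ K) (T : ℕ) :
    ∑ t ∈ Finset.range T, a t / (β + ∑ i ∈ Finset.range t, a i) ^ (1 + q)
      ≤ ((β + K) / β) ^ (1 + q) * (β ^ (-q) / q) := by
  set A : ℕ → ℝ := fun t => β + ∑ i ∈ Finset.range t, a i with hA
  have hAβ : ∀ t, β ≤ A t := fun t => le_add_of_nonneg_right (Finset.sum_nonneg fun i _ => ha0 i)
  have hApos : ∀ t, 0 < A t := fun t => lt_of_lt_of_le hβ (hAβ t)
  have hAsucc : ∀ t, A (t + 1) = A t + a t := by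
    intro t; simp [hA, Finset.sum_range_succ]; ring
  have hstep : ∀ t, a t / A t ^ (1 + q) ≤
      ((β + K) / β) ^ (1 + q) * ((A t ^ (-q) - A (t + 1) ^ (-q)) / q) := by
    intro t
    have huv : A t ≤ A (t + 1) := by rw [hAsucc]; linarith [ha0 t]
    have h1 : a t / A (t + 1) ^ (1 + q) ≤ (A t ^ (-q) - A (t + 1) ^ (-q)) / q := by
      have hst := rpow_step' hq (hApos t) huv
      have hdiff : A (t + 1) - A t = a t := by rw [hAsucc]; ring
      rw [hdiff] at hst
      rw [div_eq_mul_inv, ← Real.rpow_neg (hApos (t + 1)).le]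
      exact hst
    have h2 : A (t + 1) ≤ A t * ((β + K) / β) := by
      rw [hAsucc]
      have : K ≤ A t * K / β := by
        rw [le_div_iff₀ hβ]
        nlinarith [hAβ t, hK]
      calc A t + a t ≤ A t + K := by linarith [haK t]
        _ ≤ A t + A t * K / β := by linarith
        _ = A t * ((β + K) / β) := by field_simp
    have h3 : A (t + 1) ^ (1 + q) ≤ (A t * ((β + K) / β)) ^ (1 + q) :=
      Real.rpow_le_rpow (hApos _).le h2 (by linarith)
    have h4 : (A t * ((β + K) / β)) ^ (1 + q) = A t ^ (1 + q) * ((β + K) / β) ^ (1 + q) :=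
      Real.mul_rpow (hApos t).le (by positivity)
    have h5 : a t / A t ^ (1 + q) ≤ ((β + K) / β) ^ (1 + q) * a t / A (t + 1) ^ (1 + q) := by
      rw [div_le_div_iff₀ (Real.rpow_pos_of_pos (hApos t) _) (Real.rpow_pos_of_pos (hApos (t+1)) _)]
      calc a t * A (t + 1) ^ (1 + q) ≤ a t * (A t ^ (1 + q) * ((β + K) / β) ^ (1 + q)) := by
            rw [← h4]; exact mul_le_mul_of_nonneg_left h3 (ha0 t)
        _ = ((β + K) / β) ^ (1 + q) * a t * A t ^ (1 + q) := by ring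
    calc a t / A t ^ (1 + q) ≤ ((β + K) / β) ^ (1 + q) * (a t / A (t + 1) ^ (1 + q)) := by
          rw [← mul_div_assoc]; exact h5
      _ ≤ ((β + K) / β) ^ (1 + q) * ((A t ^ (-q) - A (t + 1) ^ (-q)) / q) := by
          apply mul_le_mul_of_nonneg_left h1 (by positivity)
  calc ∑ t ∈ Finset.range T, a t / (β + ∑ i ∈ Finset.range t, a i) ^ (1 + q)
      ≤ ∑ t ∈ Finset.range T, ((β + K) / β) ^ (1 + q) * ((A t ^ (-q) - A (t + 1) ^ (-q)) / q) :=
        Finset.sum_le_sum fun t _ => hstep t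
    _ = ((β + K) / β) ^ (1 + q) * ((∑ t ∈ Finset.range T, (A t ^ (-q) - A (t + 1) ^ (-q))) / q) := by
        rw [← Finset.mul_sum, Finset.sum_div]
    _ = ((β + K) / β) ^ (1 + q) * ((A 0 ^ (-q) - A T ^ (-q)) / q) := by
        rw [Finset.sum_range_sub' (fun t => A t ^ (-q))]
    _ ≤ ((β + K) / β) ^ (1 + q) * (β ^ (-q) / q) := by
        have hA0 : A 0 = β := by simp [hA]
        have h6 : (0:ℝ) ≤ A T ^ (-q) := Real.rpow_nonneg (hApos T).le _
        rw [hA0]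
        gcongr
        linarith

lemma liminf_zero_of' (u : ℕ → ℝ) (h0 : ∀ t, 0 ≤ u t)
    (h : ∀ δ : ℝ, 0 < δ → ¬ ∀ᶠ t in atTop, δ ≤ u t) :
    Filter.liminf u atTop = 0 := by
  rw [Filter.liminf_eq]
  have hset : {a : ℝ | ∀ᶠ n in atTop, a ≤ u n} = Set.Iic 0 := by
    ext a
    constructor
    · intro ha
      by_contra hle
      exact h a (not_le.mp (by simpa using hle)) ha
    · intro ha
      exact Filter.Eventually.of_forall fun n => le_trans ha (h0 n)
  rw [hset, csSup_Iic]

lemma harmonic_contra' {w : ℕ → ℝ} (hw : Summable w) {c : ℝ} (hc : 0 < c)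
    (hbound : ∀ᶠ t : ℕ in atTop, c / (t : ℝ) ≤ w t) : False := by
  obtain ⟨N, hN⟩ := Filter.eventually_atTop.mp hbound
  have hsum : Summable (fun s : ℕ => c / ((s : ℝ) + N)) := by
    apply Summable.of_nonneg_of_le (fun s => by positivity)
      (fun s => ?_) ((summable_nat_add_iff N).2 hw)
    have := hN (s + N) (Nat.le_add_left N s)
    push_cast at this
    exact this
  have hsum2 : Summable (fun s : ℕ => 1 / ((s : ℝ) + N)) := by
    have := hsum.mul_left (1 / c)
    apply this.congr
    intro s
    field_simp
  have hsum3 : Summable (fun n : ℕ => 1 / (n : ℝ)) := by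
    apply (summable_nat_add_iff N).mp
    apply hsum2.congr
    intro s
    push_cast
    ring
  exact Real.not_summable_one_div_natCast hsum3

lemma coord_le_norm' {d : ℕ} (x : EuclideanSpace ℝ (Fin d)) (j : Fin d) : |x j| ≤ ‖x‖ := by
  rw [EuclideanSpace.norm_eq]
  calc |x j| = Real.sqrt (‖x j‖ ^ 2) := by
        rw [Real.norm_eq_abs, Real.sqrt_sq_eq_abs, abs_abs]
    _ ≤ Real.sqrt (∑ i, ‖x i‖ ^ 2) := by
        apply Real.sqrt_le_sqrt
        exact Finset.single_le_sum (f := fun i => ‖x i‖ ^ 2)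
          (fun i _ => sq_nonneg _) (Finset.mem_univ j)

lemma condexp_euclidean_coord' {d : ℕ} {Ω : Type*} {m : MeasurableSpace Ω}
    {m0 : MeasurableSpace Ω} {μ : Measure Ω}
    [IsFiniteMeasure μ] (hm : m ≤ m0)
    {g φ : Ω → EuclideanSpace ℝ (Fin d)} (hg : Integrable g μ)
    (hφm : StronglyMeasurable[m] φ) {C : ℝ} (hφb : ∀ ω, ‖φ ω‖ ≤ C)
    (hcond : μ[g|m] =ᵐ[μ] φ) (j : Fin d) :
    (fun ω => φ ω j) =ᵐ[μ] μ[fun ω => g ω j | m] := by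
  have hφ_meas : StronglyMeasurable[m] (fun ω => φ ω j) :=
    ((EuclideanSpace.proj j).continuous.comp_stronglyMeasurable hφm)
  have hφ_int : Integrable φ μ := by
    refine Integrable.mono' (integrable_const C) ((hφm.mono hm).aestronglyMeasurable) ?_
    exact Filter.Eventually.of_forall hφb
  have hgj_int : Integrable (fun ω => g ω j) μ := by
    have := (EuclideanSpace.proj (𝕜 := ℝ) j).integrable_comp hg
    exact this
  have hφj_int : Integrable (fun ω => φ ω j) μ := by
    refine Integrable.mono' (integrable_const C) ((hφ_meas.mono hm).aestronglyMeasurable) ?_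
    refine Filter.Eventually.of_forall fun ω => ?_
    calc ‖φ ω j‖ = |φ ω j| := Real.norm_eq_abs _
      _ ≤ ‖φ ω‖ := coord_le_norm' _ j
      _ ≤ C := hφb ω
  have key : ∀ s : Set Ω, MeasurableSet[m] s → μ s < ⊤ →
      ∫ ω in s, φ ω j ∂μ = ∫ ω in s, g ω j ∂μ := by
    intro s hs _
    have h1 : ∫ ω in s, g ω ∂μ = ∫ ω in s, φ ω ∂μ := by
      rw [← setIntegral_condExp hm hg hs]
      exact setIntegral_congr_ae (hm s hs) (hcond.mono fun ω h _ => h)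
    have h2 := (EuclideanSpace.proj (𝕜 := ℝ) j).integral_comp_comm
      (hg.integrableOn : IntegrableOn g s μ)
    have h3 := (EuclideanSpace.proj (𝕜 := ℝ) j).integral_comp_comm
      (hφ_int.integrableOn : IntegrableOn φ s μ)
    simp only [PiLp.proj_apply] at h2 h3
    calc ∫ ω in s, φ ω j ∂μ = (∫ ω in s, φ ω ∂μ) j := h3
      _ = (∫ ω in s, g ω ∂μ) j := by rw [h1]
      _ = ∫ ω in s, g ω j ∂μ := h2.symm
  exact ae_eq_condExp_of_forall_setIntegral_eq hm hgj_int
    (fun s _ _ => hφj_int.integrableOn) key hφ_meas.aestronglyMeasurable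

lemma integral_inner_condexp' {d : ℕ} {Ω : Type*} {m : MeasurableSpace Ω}
    {m0 : MeasurableSpace Ω} {μ : Measure Ω}
    [IsFiniteMeasure μ] (hm : m ≤ m0)
    {g φ h : Ω → EuclideanSpace ℝ (Fin d)} (hg : Integrable g μ)
    (hφm : StronglyMeasurable[m] φ) {C : ℝ} (hφb : ∀ ω, ‖φ ω‖ ≤ C)
    (hcond : μ[g|m] =ᵐ[μ] φ)
    (hhm : StronglyMeasurable[m] h) {D : ℝ} (hhb : ∀ ω, ‖h ω‖ ≤ D) :
    ∫ ω, @inner ℝ _ _ (h ω) (g ω) ∂μ = ∫ ω, @inner ℝ _ _ (h ω) (φ ω) ∂μ := by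
  have hhj_meas : ∀ j, StronglyMeasurable[m] (fun ω => h ω j) := fun j =>
    (EuclideanSpace.proj j).continuous.comp_stronglyMeasurable hhm
  have hhj_bdd : ∀ j ω, ‖h ω j‖ ≤ D := fun j ω =>
    le_trans (by rw [Real.norm_eq_abs]; exact coord_le_norm' _ j) (hhb ω)
  have hgj_int : ∀ j, Integrable (fun ω => g ω j) μ := fun j =>
    (EuclideanSpace.proj (𝕜 := ℝ) j).integrable_comp hg
  have hφj_meas : ∀ j, StronglyMeasurable[m] (fun ω => φ ω j) := fun j =>
    (EuclideanSpace.proj j).continuous.comp_stronglyMeasurable hφm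
  have hφj_bdd : ∀ j ω, ‖φ ω j‖ ≤ C := fun j ω =>
    le_trans (by rw [Real.norm_eq_abs]; exact coord_le_norm' _ j) (hφb ω)
  have hmul_int : ∀ j, Integrable (fun ω => h ω j * g ω j) μ := fun j =>
    (hgj_int j).bdd_mul (((hhj_meas j).mono hm).aestronglyMeasurable)
      (Filter.Eventually.of_forall (hhj_bdd j))
  have hmul_int2 : ∀ j, Integrable (fun ω => h ω j * φ ω j) μ := by
    intro j
    refine Integrable.mono' (integrable_const (D * C))
      ((((hhj_meas j).mul (hφj_meas j)).mono hm).aestronglyMeasurable) ?_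
    refine Filter.Eventually.of_forall fun ω => ?_
    rw [norm_mul]
    have h1 := hhj_bdd j ω
    have h2 := hφj_bdd j ω
    have := norm_nonneg (h ω j); have := norm_nonneg (φ ω j)
    nlinarith
  have key : ∀ j, ∫ ω, h ω j * g ω j ∂μ = ∫ ω, h ω j * φ ω j ∂μ := by
    intro j
    have p1 := condExp_stronglyMeasurable_mul_of_bound hm (hhj_meas j) (hgj_int j) D
      (Filter.Eventually.of_forall (hhj_bdd j))
    have p2 := condexp_euclidean_coord' hm hg hφm hφb hcond j
    calc ∫ ω, h ω j * g ω j ∂μ = ∫ ω, (μ[fun ω => h ω j * g ω j|m]) ω ∂μ :=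
          (integral_condExp hm).symm
      _ = ∫ ω, h ω j * (μ[fun ω => g ω j|m]) ω ∂μ := integral_congr_ae p1
      _ = ∫ ω, h ω j * φ ω j ∂μ := by
          refine integral_congr_ae ?_
          filter_upwards [p2] with ω hω
          rw [← hω]
  have inner_expand : ∀ (a b : EuclideanSpace ℝ (Fin d)),
      @inner ℝ _ _ a b = ∑ j, a j * b j := by
    intro a b
    simp [PiLp.inner_apply, RCLike.inner_apply, conj_trivial, mul_comm]
  calc ∫ ω, @inner ℝ _ _ (h ω) (g ω) ∂μ = ∫ ω, ∑ j, h ω j * g ω j ∂μ := by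
        simp_rw [inner_expand]
    _ = ∑ j, ∫ ω, h ω j * g ω j ∂μ := integral_finset_sum _ fun j _ => hmul_int j
    _ = ∑ j, ∫ ω, h ω j * φ ω j ∂μ := Finset.sum_congr rfl fun j _ => key j
    _ = ∫ ω, ∑ j, h ω j * φ ω j ∂μ := (integral_finset_sum _ fun j _ => hmul_int2 j).symm
    _ = ∫ ω, @inner ℝ _ _ (h ω) (φ ω) ∂μ := by simp_rw [inner_expand]

/-- Almost sure `liminf` result for SGD with the
global generalized AdaGrad stepsizes, for an `M`-smooth, `L`-Lipschitz function bounded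
from below, with unbiased stochastic gradients whose noise has support bounded by `S`. -/
theorem sgd_global_adagrad_liminf_zero_ae
    {d : ℕ} {Ω : Type*} {m0 : MeasurableSpace Ω} {μ : Measure Ω}
    [IsProbabilityMeasure μ] (ℱ : Filtration ℕ m0)
    (f : EuclideanSpace ℝ (Fin d) → ℝ) (M L S α β ε : ℝ)
    (hf_diff : Differentiable ℝ f)
    (hf_smooth : ∀ y z, ‖gradient f y - gradient f z‖ ≤ M * ‖y - z‖)
    (hf_lip : ∀ y z, |f y - f z| ≤ L * ‖y - z‖)
    (hf_bdd : BddBelow (Set.range f))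
    (hα : 0 < α) (hβ : 0 < β) (hε : 0 < ε) (hε' : ε ≤ 1 / 2)
    (x g : ℕ → Ω → EuclideanSpace ℝ (Fin d)) (η : ℕ → Ω → ℝ)
    (x₁ : EuclideanSpace ℝ (Fin d))
    (hx0 : ∀ ω, x 0 ω = x₁)
    (hg_meas : ∀ t, StronglyMeasurable[ℱ (t + 1)] (g t))
    (hg_int : ∀ t, Integrable (g t) μ)
    (hg_cond : ∀ t, μ[g t | ℱ t] =ᵐ[μ] fun ω => gradient f (x t ω))
    (hnoise : ∀ᵐ ω ∂μ, ∀ t, ‖g t ω - gradient f (x t ω)‖ ≤ S)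
    (hη : ∀ t ω, η t ω =
      α / (β + ∑ i ∈ Finset.range t, ‖g i ω‖ ^ 2) ^ ((1 : ℝ) / 2 + ε))
    (hupd : ∀ t ω, x (t + 1) ω = x t ω - η t ω • g t ω) :
    ∀ᵐ ω ∂μ, Filter.liminf
      (fun t : ℕ => ‖gradient f (x t ω)‖ ^ 2 * (t : ℝ) ^ ((1 : ℝ) / 2 - ε)) atTop = 0 := by
  classical
  -- constants
  set M₀ : ℝ := max M 0 with hM₀def
  have hM₀ : 0 ≤ M₀ := le_max_right _ _
  set L₀ : ℝ := max L 0 with hL₀def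
  have hL₀ : 0 ≤ L₀ := le_max_right _ _
  have hsm₀ : ∀ y z, ‖gradient f y - gradient f z‖ ≤ M₀ * ‖y - z‖ := fun y z =>
    le_trans (hf_smooth y z) (mul_le_mul_of_nonneg_right (le_max_left _ _) (norm_nonneg _))
  have hlip₀ : ∀ y z, |f y - f z| ≤ L₀ * ‖y - z‖ := fun y z =>
    le_trans (hf_lip y z) (mul_le_mul_of_nonneg_right (le_max_left _ _) (norm_nonneg _))
  have hgradb : ∀ y, ‖gradient f y‖ ≤ L₀ := norm_gradient_le_of_lip' hL₀ hlip₀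
  have hS : 0 ≤ S := by
    obtain ⟨ω, hω⟩ := hnoise.exists
    exact le_trans (norm_nonneg _) (hω 0)
  set e : ℝ := (1 : ℝ) / 2 + ε with hedef
  have he_pos : 0 < e := by rw [hedef]; linarith
  set q : ℝ := 2 * ε with hqdef
  have hq : 0 < q := by rw [hqdef]; linarith
  have hee : e + e = 1 + q := by rw [hedef, hqdef]; ring
  set K : ℝ := (L₀ + S) ^ 2 with hKdef
  have hK : 0 ≤ K := sq_nonneg _
  set ηmax : ℝ := α / β ^ e with hηmaxdef
  have hηmax_pos : 0 < ηmax := div_pos hα (Real.rpow_pos_of_pos hβ _)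
  set clow : ℝ := α / (β + K) ^ e with hclowdef
  have hclow_pos : 0 < clow := div_pos hα (Real.rpow_pos_of_pos (by linarith) _)
  set Cser : ℝ := ((β + K) / β) ^ (1 + q) * (β ^ (-q) / q) with hCserdef
  set B : ℝ := sInf (Set.range f) with hBdef
  have hB : ∀ y, B ≤ f y := fun y => csInf_le hf_bdd (Set.mem_range_self y)
  set φ : ℕ → Ω → EuclideanSpace ℝ (Fin d) := fun t ω => gradient f (x t ω) with hφdef
  set A : ℕ → Ω → ℝ := fun t ω => β + ∑ i ∈ Finset.range t, ‖g i ω‖ ^ 2 with hAdef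
  have hAβ : ∀ t ω, β ≤ A t ω := fun t ω =>
    le_add_of_nonneg_right (Finset.sum_nonneg fun i _ => sq_nonneg _)
  have hApos : ∀ t ω, 0 < A t ω := fun t ω => lt_of_lt_of_le hβ (hAβ t ω)
  have hηA : ∀ t ω, η t ω = α / A t ω ^ e := fun t ω => hη t ω
  have hη_pos : ∀ t ω, 0 < η t ω := fun t ω => by
    rw [hηA]; exact div_pos hα (Real.rpow_pos_of_pos (hApos t ω) _)
  have hη_le : ∀ t ω, η t ω ≤ ηmax := by
    intro t ω
    rw [hηA, hηmaxdef]
    exact div_le_div_of_nonneg_left hα.le (Real.rpow_pos_of_pos hβ _)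
      (Real.rpow_le_rpow hβ.le (hAβ t ω) he_pos.le)
  -- continuity of the gradient
  have hgrad_cont : Continuous (gradient f) := by
    have : LipschitzWith M₀.toNNReal (gradient f) := by
      refine LipschitzWith.of_dist_le_mul fun a b => ?_
      rw [dist_eq_norm, dist_eq_norm]
      simpa [Real.coe_toNNReal M₀ hM₀] using hsm₀ a b
    exact this.continuous
  -- measurability
  have hgi_meas : ∀ i t, i < t → StronglyMeasurable[ℱ t] (g i) := fun i t hit =>
    (hg_meas i).mono (ℱ.mono hit)
  have hA_meas : ∀ t, StronglyMeasurable[ℱ t] (A t) := by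
    intro t
    refine StronglyMeasurable.add stronglyMeasurable_const ?_
    refine Finset.stronglyMeasurable_fun_sum _ fun i hi => ?_
    exact ((hgi_meas i t (Finset.mem_range.mp hi)).norm).pow 2
  have hFcont : Continuous (fun s : ℝ => α / (max s β) ^ e) := by
    refine Continuous.div continuous_const ?_ ?_
    · exact (Real.continuous_rpow_const he_pos.le).comp
        ((continuous_id.max continuous_const))
    · intro s
      exact (Real.rpow_pos_of_pos (lt_of_lt_of_le hβ (le_max_right s β)) e).ne'
  have hη_meas : ∀ t, StronglyMeasurable[ℱ t] (η t) := by
    intro t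
    have hfun : η t = fun ω => α / (max (A t ω) β) ^ e := by
      funext ω
      rw [hηA, max_eq_left (hAβ t ω)]
    rw [hfun]
    exact hFcont.comp_stronglyMeasurable (hA_meas t)
  have hx_meas : ∀ t, StronglyMeasurable[ℱ t] (x t) := by
    intro t
    induction t with
    | zero =>
        have : x 0 = fun _ => x₁ := funext hx0
        rw [this]; exact stronglyMeasurable_const
    | succ t ih =>
        have hfun : x (t + 1) = fun ω => x t ω - η t ω • g t ω := funext (hupd t)
        rw [hfun]
        exact ((ih.mono (ℱ.mono (Nat.le_succ t))).sub
          (((hη_meas t).mono (ℱ.mono (Nat.le_succ t))).smul (hg_meas t)))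
  have hφ_meas : ∀ t, StronglyMeasurable[ℱ t] (φ t) := fun t =>
    hgrad_cont.comp_stronglyMeasurable (hx_meas t)
  have hφb : ∀ t ω, ‖φ t ω‖ ≤ L₀ := fun t ω => hgradb _
  -- good event: bound on the gradients
  have hgb_ae : ∀ᵐ ω ∂μ, ∀ i, ‖g i ω‖ ≤ L₀ + S := by
    filter_upwards [hnoise] with ω hω i
    calc ‖g i ω‖ = ‖(g i ω - φ i ω) + φ i ω‖ := by rw [sub_add_cancel]
      _ ≤ ‖g i ω - φ i ω‖ + ‖φ i ω‖ := norm_add_le _ _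
      _ ≤ S + L₀ := add_le_add (hω i) (hφb i ω)
      _ = L₀ + S := by ring
  -- the compensated direction
  set h : ℕ → Ω → EuclideanSpace ℝ (Fin d) := fun t ω => η t ω • φ t ω with hhdef
  have hh_meas : ∀ t, StronglyMeasurable[ℱ t] (h t) := fun t => (hη_meas t).smul (hφ_meas t)
  have hhb : ∀ t ω, ‖h t ω‖ ≤ ηmax * L₀ := by
    intro t ω
    calc ‖h t ω‖ = |η t ω| * ‖φ t ω‖ := by rw [hhdef]; rw [norm_smul, Real.norm_eq_abs]
      _ ≤ ηmax * L₀ := by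
          rw [abs_of_pos (hη_pos t ω)]
          exact mul_le_mul (hη_le t ω) (hφb t ω) (norm_nonneg _) hηmax_pos.le
  -- integrability
  have int_fx : ∀ t, Integrable (fun ω => f (x t ω)) μ := by
    intro t
    have hmeas : AEStronglyMeasurable (fun ω => f (x t ω)) μ :=
      (hf_diff.continuous.comp_stronglyMeasurable
        ((hx_meas t).mono (ℱ.le t))).aestronglyMeasurable
    refine Integrable.mono' (integrable_const (|f x₁| + L₀ * (t * (ηmax * (L₀ + S))))) hmeas ?_
    filter_upwards [hgb_ae] with ω hgb
    have hxb : ∀ s : ℕ, ‖x s ω - x₁‖ ≤ s * (ηmax * (L₀ + S)) := by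
      intro s
      induction s with
      | zero => simp [hx0]
      | succ s ih =>
          have hxe : x (s + 1) ω - x₁ = (x s ω - x₁) - η s ω • g s ω := by
            rw [hupd s ω]; abel
          rw [hxe]
          calc ‖(x s ω - x₁) - η s ω • g s ω‖
              ≤ ‖x s ω - x₁‖ + ‖η s ω • g s ω‖ := norm_sub_le _ _
            _ ≤ s * (ηmax * (L₀ + S)) + ηmax * (L₀ + S) := by
                refine add_le_add ih ?_
                rw [norm_smul, Real.norm_eq_abs, abs_of_pos (hη_pos s ω)]
                exact mul_le_mul (hη_le s ω) (hgb s) (norm_nonneg _) hηmax_pos.le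
            _ = (s + 1 : ℕ) * (ηmax * (L₀ + S)) := by push_cast; ring
    have h1 : |f (x t ω)| - |f x₁| ≤ |f (x t ω) - f x₁| := abs_sub_abs_le_abs_sub _ _
    have h2 : |f (x t ω) - f x₁| ≤ L₀ * ‖x t ω - x₁‖ := hlip₀ (x t ω) x₁
    have h3 : L₀ * ‖x t ω - x₁‖ ≤ L₀ * (t * (ηmax * (L₀ + S))) :=
      mul_le_mul_of_nonneg_left (hxb t) hL₀
    rw [Real.norm_eq_abs]
    linarith
  have hinner_int : ∀ t, Integrable (fun ω => @inner ℝ _ _ (h t ω) (g t ω)) μ := by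
    intro t
    have hmeas : AEStronglyMeasurable (fun ω => @inner ℝ _ _ (h t ω) (g t ω)) μ :=
      AEStronglyMeasurable.inner
        (((hh_meas t).mono (ℱ.le t)).aestronglyMeasurable)
        (((hg_meas t).mono (ℱ.le (t + 1))).aestronglyMeasurable)
    refine Integrable.mono' (integrable_const ((ηmax * L₀) * (L₀ + S))) hmeas ?_
    filter_upwards [hgb_ae] with ω hgb
    calc ‖@inner ℝ _ _ (h t ω) (g t ω)‖ ≤ ‖h t ω‖ * ‖g t ω‖ := norm_inner_le_norm _ _
      _ ≤ (ηmax * L₀) * (L₀ + S) :=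
          mul_le_mul (hhb t ω) (hgb t) (norm_nonneg _)
            (mul_nonneg hηmax_pos.le hL₀)
  have hJ_int : ∀ t, Integrable (fun ω => η t ω ^ 2 * ‖g t ω‖ ^ 2) μ := by
    intro t
    have hmeas : AEStronglyMeasurable (fun ω => η t ω ^ 2 * ‖g t ω‖ ^ 2) μ :=
      ((((hη_meas t).mono (ℱ.le t)).pow 2).mul
        (((hg_meas t).mono (ℱ.le (t + 1))).norm.pow 2)).aestronglyMeasurable
    refine Integrable.mono' (integrable_const (ηmax ^ 2 * (L₀ + S) ^ 2)) hmeas ?_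
    filter_upwards [hgb_ae] with ω hgb
    have h1 : η t ω ^ 2 ≤ ηmax ^ 2 :=
      pow_le_pow_left₀ (hη_pos t ω).le (hη_le t ω) 2
    have h2 : ‖g t ω‖ ^ 2 ≤ (L₀ + S) ^ 2 :=
      pow_le_pow_left₀ (norm_nonneg _) (hgb t) 2
    rw [Real.norm_eq_abs, abs_of_nonneg (by positivity)]
    exact mul_le_mul h1 h2 (sq_nonneg _) (sq_nonneg _)
  have hw_int : ∀ t, Integrable (fun ω => η t ω * ‖φ t ω‖ ^ 2) μ := by
    intro t
    have hmeas : AEStronglyMeasurable (fun ω => η t ω * ‖φ t ω‖ ^ 2) μ :=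
      (((hη_meas t).mono (ℱ.le t)).mul
        (((hφ_meas t).mono (ℱ.le t)).norm.pow 2)).aestronglyMeasurable
    refine Integrable.mono' (integrable_const (ηmax * L₀ ^ 2)) hmeas ?_
    refine Filter.Eventually.of_forall fun ω => ?_
    rw [Real.norm_eq_abs, abs_of_nonneg (mul_nonneg (hη_pos t ω).le (sq_nonneg _))]
    exact mul_le_mul (hη_le t ω) (pow_le_pow_left₀ (norm_nonneg _) (hφb t ω) 2)
      (sq_nonneg _) hηmax_pos.le
  set I : ℕ → ℝ := fun t => ∫ ω, η t ω * ‖φ t ω‖ ^ 2 ∂μ with hIdef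
  set J : ℕ → ℝ := fun t => ∫ ω, η t ω ^ 2 * ‖g t ω‖ ^ 2 ∂μ with hJdef
  -- pointwise descent inequality
  have hdescent : ∀ t ω, f (x (t + 1) ω) + @inner ℝ _ _ (h t ω) (g t ω)
      ≤ f (x t ω) + M₀ * (η t ω ^ 2 * ‖g t ω‖ ^ 2) := by
    intro t ω
    have hd := descent_lemma' hM₀ hf_diff hsm₀ (x t ω) (-(η t ω • g t ω))
    have hxe : x t ω + -(η t ω • g t ω) = x (t + 1) ω := by
      rw [hupd t ω, sub_eq_add_neg]
    rw [hxe] at hd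
    have hi : @inner ℝ _ _ (gradient f (x t ω)) (-(η t ω • g t ω))
        = - @inner ℝ _ _ (h t ω) (g t ω) := by
      rw [inner_neg_right]
      congr 1
      simp only [hhdef, hφdef]
      rw [real_inner_smul_left, real_inner_smul_right]
    rw [hi] at hd
    have hn : ‖-(η t ω • g t ω)‖ ^ 2 = η t ω ^ 2 * ‖g t ω‖ ^ 2 := by
      rw [norm_neg, norm_smul, Real.norm_eq_abs, mul_pow, sq_abs]
    rw [hn] at hd
    linarith
  -- expectation identity
  have hEinner : ∀ t, ∫ ω, @inner ℝ _ _ (h t ω) (g t ω) ∂μ = I t := by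
    intro t
    rw [integral_inner_condexp' (ℱ.le t) (hg_int t) (hφ_meas t)
      (fun ω => hφb t ω) (hg_cond t) (hh_meas t) (fun ω => hhb t ω)]
    simp only [hIdef]
    refine integral_congr_ae (Filter.Eventually.of_forall fun ω => ?_)
    simp only [hhdef]
    rw [real_inner_smul_left, real_inner_self_eq_norm_sq]
  -- per-step integral inequality
  have hstep : ∀ t, (∫ ω, f (x (t + 1) ω) ∂μ) + I t ≤ (∫ ω, f (x t ω) ∂μ) + M₀ * J t := by
    intro t
    have hle : ∫ ω, (f (x (t + 1) ω) + @inner ℝ _ _ (h t ω) (g t ω)) ∂μ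
        ≤ ∫ ω, (f (x t ω) + M₀ * (η t ω ^ 2 * ‖g t ω‖ ^ 2)) ∂μ :=
      integral_mono ((int_fx (t + 1)).add (hinner_int t))
        ((int_fx t).add ((hJ_int t).const_mul M₀)) (fun ω => hdescent t ω)
    rw [integral_add (int_fx (t + 1)) (hinner_int t),
      integral_add (int_fx t) ((hJ_int t).const_mul M₀),
      integral_const_mul, hEinner t] at hle
    exact hle
  -- telescoping
  have hIJsum : ∀ T, (∫ ω, f (x T ω) ∂μ) + ∑ t ∈ Finset.range T, I t
      ≤ f x₁ + M₀ * ∑ t ∈ Finset.range T, J t := by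
    intro T
    induction T with
    | zero =>
        have hx0' : (fun ω => f (x 0 ω)) = fun _ => f x₁ := funext fun ω => by rw [hx0]
        simp [hx0']
    | succ T ih =>
        rw [Finset.sum_range_succ, Finset.sum_range_succ, mul_add]
        have := hstep T
        linarith
  -- bound on the sums of J
  have hJsum : ∀ T, ∑ t ∈ Finset.range T, J t ≤ α ^ 2 * Cser := by
    intro T
    have hint : Integrable (fun ω => ∑ t ∈ Finset.range T, η t ω ^ 2 * ‖g t ω‖ ^ 2) μ :=
      integrable_finset_sum _ fun t _ => hJ_int t
    have hsum_eq : ∑ t ∈ Finset.range T, J t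
        = ∫ ω, ∑ t ∈ Finset.range T, η t ω ^ 2 * ‖g t ω‖ ^ 2 ∂μ :=
      (integral_finset_sum _ fun t _ => hJ_int t).symm
    rw [hsum_eq]
    have hb : ∀ᵐ ω ∂μ, ∑ t ∈ Finset.range T, η t ω ^ 2 * ‖g t ω‖ ^ 2 ≤ α ^ 2 * Cser := by
      filter_upwards [hgb_ae] with ω hgb
      have h1 : ∀ t, (A t ω ^ e) ^ 2 = A t ω ^ (1 + q) := fun t => by
        rw [sq, ← Real.rpow_add (hApos t ω), hee]
      have hterm : ∀ t, η t ω ^ 2 * ‖g t ω‖ ^ 2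
          = α ^ 2 * (‖g t ω‖ ^ 2 / A t ω ^ (1 + q)) := by
        intro t
        rw [hηA, div_pow, h1 t]
        ring
      calc ∑ t ∈ Finset.range T, η t ω ^ 2 * ‖g t ω‖ ^ 2
          = α ^ 2 * ∑ t ∈ Finset.range T, ‖g t ω‖ ^ 2 / A t ω ^ (1 + q) := by
            rw [Finset.mul_sum]
            exact Finset.sum_congr rfl fun t _ => hterm t
        _ ≤ α ^ 2 * Cser := by
            refine mul_le_mul_of_nonneg_left ?_ (sq_nonneg α)
            rw [hCserdef]
            have := aux_series' hβ hK hq (fun i => ‖g i ω‖ ^ 2)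
              (fun i => sq_nonneg _)
              (fun i => pow_le_pow_left₀ (norm_nonneg _) (hgb i) 2) T
            simpa only [hAdef] using this
    calc ∫ ω, ∑ t ∈ Finset.range T, η t ω ^ 2 * ‖g t ω‖ ^ 2 ∂μ
        ≤ ∫ _, α ^ 2 * Cser ∂μ := integral_mono_ae hint (integrable_const _) hb
      _ = α ^ 2 * Cser := by simp
  -- bound on the sums of I
  set K1 : ℝ := f x₁ - B + M₀ * (α ^ 2 * Cser) with hK1def
  have hIsum : ∀ T, ∑ t ∈ Finset.range T, I t ≤ K1 := by
    intro T
    have h1 := hIJsum T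
    have h2 : B ≤ ∫ ω, f (x T ω) ∂μ := by
      have h2' : ∫ _, B ∂μ ≤ ∫ ω, f (x T ω) ∂μ :=
        integral_mono (integrable_const B) (int_fx T) (fun ω => hB _)
      simpa using h2'
    have h3 : M₀ * ∑ t ∈ Finset.range T, J t ≤ M₀ * (α ^ 2 * Cser) :=
      mul_le_mul_of_nonneg_left (hJsum T) hM₀
    rw [hK1def]
    linarith
  have hI0 : ∀ t, 0 ≤ I t := fun t =>
    integral_nonneg fun ω => mul_nonneg (hη_pos t ω).le (sq_nonneg _)
  -- almost sure summability of the weighted gradients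
  have hw_meas : ∀ t, Measurable (fun ω => ENNReal.ofReal (η t ω * ‖φ t ω‖ ^ 2)) := by
    intro t
    apply Measurable.ennreal_ofReal
    exact (((hη_meas t).mono (ℱ.le t)).mul
      (((hφ_meas t).mono (ℱ.le t)).norm.pow 2)).measurable
  have hsummable : ∀ᵐ ω ∂μ, Summable (fun t => η t ω * ‖φ t ω‖ ^ 2) := by
    have h1 : ∀ t, ∫⁻ ω, ENNReal.ofReal (η t ω * ‖φ t ω‖ ^ 2) ∂μ = ENNReal.ofReal (I t) := by
      intro t
      rw [← ofReal_integral_eq_lintegral_ofReal (hw_int t)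
        (Filter.Eventually.of_forall fun ω => mul_nonneg (hη_pos t ω).le (sq_nonneg _))]
    have h2 : ∑' t, ∫⁻ ω, ENNReal.ofReal (η t ω * ‖φ t ω‖ ^ 2) ∂μ ≤ ENNReal.ofReal K1 := by
      simp only [h1]
      refine ENNReal.tsum_le_of_sum_range_le fun n => ?_
      rw [← ENNReal.ofReal_sum_of_nonneg (fun i _ => hI0 i)]
      exact ENNReal.ofReal_le_ofReal (hIsum n)
    have h3 : ∫⁻ ω, ∑' t, ENNReal.ofReal (η t ω * ‖φ t ω‖ ^ 2) ∂μ < ⊤ := by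
      rw [lintegral_tsum (fun t => (hw_meas t).aemeasurable)]
      exact lt_of_le_of_lt h2 ENNReal.ofReal_lt_top
    have h4 := ae_lt_top (Measurable.ennreal_tsum hw_meas) h3.ne
    filter_upwards [h4] with ω hω
    refine (ENNReal.summable_toReal hω.ne).congr fun t => ?_
    exact ENNReal.toReal_ofReal (mul_nonneg (hη_pos t ω).le (sq_nonneg _))
  -- conclusion
  filter_upwards [hsummable, hgb_ae] with ω hsum hgb
  apply liminf_zero_of'
  · intro t
    exact mul_nonneg (sq_nonneg _) (Real.rpow_nonneg (Nat.cast_nonneg t) _)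
  · intro δ hδ hev
    refine harmonic_contra' hsum (mul_pos hclow_pos hδ) ?_
    filter_upwards [hev, Filter.eventually_ge_atTop 1] with t hut ht1
    have ht0 : (0:ℝ) < (t : ℝ) := by
      exact_mod_cast Nat.lt_of_lt_of_le Nat.zero_lt_one ht1
    have hAle : A t ω ≤ (β + K) * t := by
      have hs : ∑ i ∈ Finset.range t, ‖g i ω‖ ^ 2 ≤ (t : ℝ) * K := by
        calc ∑ i ∈ Finset.range t, ‖g i ω‖ ^ 2 ≤ ∑ _i ∈ Finset.range t, K :=
              Finset.sum_le_sum fun i _ => pow_le_pow_left₀ (norm_nonneg _) (hgb i) 2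
          _ = (t : ℝ) * K := by rw [Finset.sum_const, Finset.card_range, nsmul_eq_mul]
      have hβt : β ≤ β * t := le_mul_of_one_le_right hβ.le (by exact_mod_cast ht1)
      have hAexp : A t ω = β + ∑ i ∈ Finset.range t, ‖g i ω‖ ^ 2 := by rw [hAdef]
      rw [hAexp]
      calc β + ∑ i ∈ Finset.range t, ‖g i ω‖ ^ 2 ≤ β + (t : ℝ) * K := by linarith
        _ ≤ β * t + K * t := by linarith
        _ = (β + K) * t := by ring
    have hηlow : clow / (t : ℝ) ^ e ≤ η t ω := by
      rw [hηA, hclowdef, div_div]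
      have hA_e : A t ω ^ e ≤ (β + K) ^ e * (t : ℝ) ^ e := by
        rw [← Real.mul_rpow (by linarith) ht0.le]
        exact Real.rpow_le_rpow (hApos t ω).le hAle he_pos.le
      exact div_le_div_of_nonneg_left hα.le (Real.rpow_pos_of_pos (hApos t ω) e) hA_e
    have hts : (t : ℝ) ^ e * (t : ℝ) ^ ((1:ℝ)/2 - ε) = (t : ℝ) := by
      rw [← Real.rpow_add ht0, hedef]
      norm_num
    have hφ2 : δ / (t : ℝ) ^ ((1:ℝ)/2 - ε) ≤ ‖φ t ω‖ ^ 2 := by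
      rw [div_le_iff₀ (Real.rpow_pos_of_pos ht0 _)]
      simpa using hut
    calc clow * δ / (t : ℝ) = (clow / (t : ℝ) ^ e) * (δ / (t : ℝ) ^ ((1:ℝ)/2 - ε)) := by
          rw [div_mul_div_comm, hts]
      _ ≤ η t ω * ‖φ t ω‖ ^ 2 :=
          mul_le_mul hηlow hφ2
            (div_nonneg hδ.le (Real.rpow_nonneg ht0.le _)) (hη_pos t ω).le
end

section
/- Let (a_t)_{t≥1} and (b_t)_{t≥1} be two sequences of non-negative real numbers. Assume that the series Σ_{t=1}^∞ a_t b_t converges, that the series Σ_{t=1}^∞ a_t diverges, and that there exists K ≥ 0 such that |b_{t+1} − b_t| ≤ K a_t for all t. Then b_t converges to 0 as t → ∞. -/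
open Filter

/-- telescoping over Ico -/
lemma telescope_Ico (f : ℕ → ℝ) {m n : ℕ} (h : m ≤ n) :
    ∑ t ∈ Finset.Ico m n, (f (t + 1) - f t) = f n - f m := by
  rw [Finset.sum_Ico_eq_sub _ h, Finset.sum_range_sub, Finset.sum_range_sub]
  ring

/-- If `Σ aₜ bₜ` converges, `Σ aₜ` diverges, and `|b_{t+1} − bₜ| ≤ K aₜ`
for non-negative sequences `a`, `b` and some `K ≥ 0`, then `bₜ → 0`. -/
theorem tendsto_zero_of_summable_mul_of_divergent
    (a b : ℕ → ℝ) (ha : ∀ t, 0 ≤ a t) (hb : ∀ t, 0 ≤ b t)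
    (hconv : ∃ s : ℝ, Tendsto (fun T => ∑ t ∈ Finset.range T, a t * b t) atTop (nhds s))
    (hdiv : Tendsto (fun T => ∑ t ∈ Finset.range T, a t) atTop atTop)
    (K : ℝ) (hK : 0 ≤ K) (hKa : ∀ t, |b (t + 1) - b t| ≤ K * a t) :
    Tendsto b atTop (nhds 0) := by
  obtain ⟨s, hs⟩ := hconv
  set S : ℕ → ℝ := fun T => ∑ t ∈ Finset.range T, a t * b t with hSdef
  set K' : ℝ := K + 1 with hK'def
  have hK'pos : (0:ℝ) < K' := by positivity
  have hKa' : ∀ t, |b (t + 1) - b t| ≤ K' * a t := fun t =>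
    (hKa t).trans (by nlinarith [ha t])
  have hab : ∀ t, 0 ≤ a t * b t := fun t => mul_nonneg (ha t) (hb t)
  have hSmono : Monotone S := by
    intro i j hij
    exact Finset.sum_le_sum_of_subset_of_nonneg (Finset.range_subset_range.mpr hij)
      (fun t _ _ => hab t)
  rw [Metric.tendsto_atTop]
  intro ε hε
  have hcauchy : CauchySeq S := hs.cauchySeq
  obtain ⟨N, hN⟩ := Metric.cauchySeq_iff'.mp hcauchy (ε ^ 2 / (4 * K')) (by positivity)
  refine ⟨N, fun m hm => ?_⟩
  rw [Real.dist_eq, sub_zero, abs_of_nonneg (hb m)]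
  by_contra hbm
  push_neg at hbm
  -- b stays ≥ ε/2 only finitely long
  have hex : ∃ n, m ≤ n ∧ b n < ε / 2 := by
    by_contra hne
    push_neg at hne
    have hmono : Tendsto S atTop atTop := by
      have hf : Tendsto (fun T => ε / 2 * ((∑ t ∈ Finset.range T, a t)
          - ∑ t ∈ Finset.range m, a t)) atTop atTop := by
        have := (tendsto_atTop_add_const_right atTop
          (-∑ t ∈ Finset.range m, a t) hdiv).const_mul_atTop (by linarith : (0:ℝ) < ε / 2)
        simpa [sub_eq_add_neg] using this
      refine tendsto_atTop_mono' atTop ?_ hf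
      filter_upwards [eventually_ge_atTop m] with T hT
      have h1 : (∑ t ∈ Finset.range T, a t) - ∑ t ∈ Finset.range m, a t
          = ∑ t ∈ Finset.Ico m T, a t := (Finset.sum_Ico_eq_sub a hT).symm
      rw [h1, Finset.mul_sum]
      calc ∑ t ∈ Finset.Ico m T, ε / 2 * a t
          ≤ ∑ t ∈ Finset.Ico m T, a t * b t := by
            refine Finset.sum_le_sum fun t ht => ?_
            rw [mul_comm]
            exact mul_le_mul_of_nonneg_left (hne t (Finset.mem_Ico.mp ht).1) (ha t)
        _ ≤ S T := by
            refine Finset.sum_le_sum_of_subset_of_nonneg ?_ (fun t _ _ => hab t)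
            rw [Finset.range_eq_Ico]
            exact Finset.Ico_subset_Ico (Nat.zero_le m) le_rfl
    exact not_tendsto_nhds_of_tendsto_atTop hmono s hs
  classical
  set n := Nat.find hex with hn
  obtain ⟨hmn, hbn⟩ : m ≤ n ∧ b n < ε / 2 := Nat.find_spec hex
  have hge : ∀ t, m ≤ t → t < n → ε / 2 ≤ b t := by
    intro t hmt htn
    by_contra h
    push_neg at h
    exact Nat.find_min hex htn ⟨hmt, h⟩
  set A : ℝ := ∑ t ∈ Finset.Ico m n, a t with hA
  -- A ≥ ε/(2K')
  have hAge : ε / 2 ≤ K' * A := by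
    have htel : |b n - b m| ≤ ∑ t ∈ Finset.Ico m n, |b (t + 1) - b t| := by
      rw [← telescope_Ico b hmn]
      exact Finset.abs_sum_le_sum_abs _ _
    have h2 : ∑ t ∈ Finset.Ico m n, |b (t + 1) - b t| ≤ K' * A := by
      rw [hA, Finset.mul_sum]
      exact Finset.sum_le_sum fun t _ => hKa' t
    have h3 : ε / 2 ≤ |b n - b m| := by
      rw [abs_sub_comm, abs_of_nonneg (by linarith)]
      linarith
    exact h3.trans (htel.trans h2)
  -- tail sum is large
  have htail : ε ^ 2 / (4 * K') ≤ ∑ t ∈ Finset.Ico m n, a t * b t := by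
    have h1 : ∑ t ∈ Finset.Ico m n, ε / 2 * a t ≤ ∑ t ∈ Finset.Ico m n, a t * b t := by
      refine Finset.sum_le_sum fun t ht => ?_
      rw [mul_comm]
      obtain ⟨h1, h2⟩ := Finset.mem_Ico.mp ht
      exact mul_le_mul_of_nonneg_left (hge t h1 h2) (ha t)
    have h2 : ε / 2 * A ≤ ∑ t ∈ Finset.Ico m n, a t * b t := by
      rw [hA, Finset.mul_sum] at *
      exact h1
    have hAnn : ε / (2 * K') ≤ A := by
      rw [div_le_iff₀ (by positivity)] at *
      nlinarith
    calc ε ^ 2 / (4 * K') = ε / 2 * (ε / (2 * K')) := by field_simp; ring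
      _ ≤ ε / 2 * A := by
          exact mul_le_mul_of_nonneg_left hAnn (by linarith)
      _ ≤ _ := h2
  -- but tail sum is small
  have hsmall : ∑ t ∈ Finset.Ico m n, a t * b t < ε ^ 2 / (4 * K') := by
    have h1 : ∑ t ∈ Finset.Ico m n, a t * b t = S n - S m :=
      Finset.sum_Ico_eq_sub _ hmn
    have h2 : dist (S n) (S N) < ε ^ 2 / (4 * K') := hN n (hm.trans hmn)
    rw [Real.dist_eq] at h2
    have h3 : S N ≤ S m := hSmono hm
    have h4 : S n - S N ≤ |S n - S N| := le_abs_self _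
    linarith [h1 ▸ (by linarith : S n - S m ≤ S n - S N)]
  linarith
end

section
/- Let a_0 > 0, let a_1,…,a_T ≥ 0, and let β > 1. Then Σ_{t=1}^T a_t / (a_0 + Σ_{i=1}^t a_i)^β ≤ 1 / ((β − 1) a_0^{β−1}). -/
private lemma key_step {s S β : ℝ} (hs : 0 < s) (hsS : s ≤ S) (hβ : 1 < β) :
    (S - s) / S ^ β ≤ (s ^ (1 - β) - S ^ (1 - β)) / (β - 1) := by
  have hS : 0 < S := lt_of_lt_of_le hs hsS
  have hβ0 : 0 < β - 1 := by linarith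
  have hSb : 0 < S ^ β := Real.rpow_pos_of_pos hS β
  rw [div_le_div_iff₀ hSb hβ0]
  have hr : (1 : ℝ) ≤ S / s := (one_le_div hs).2 hsS
  have hber : 1 + β * (S / s - 1) ≤ (S / s) ^ β := by
    have := one_add_mul_self_le_rpow_one_add (s := S / s - 1) (by linarith) (le_of_lt hβ)
    simpa using this
  have hpow : (S / s) ^ β = S ^ β / s ^ β := Real.div_rpow hS.le hs.le β
  have hmul : s * (1 + β * (S / s - 1)) ≤ s * (S / s) ^ β :=
    mul_le_mul_of_nonneg_left hber hs.le
  have hleft : s * (1 + β * (S / s - 1)) = S + (β - 1) * (S - s) := by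
    field_simp
    ring
  have hright : s * (S / s) ^ β = S ^ β * s ^ (1 - β) := by
    rw [hpow]
    have : s ^ (1 - β) = s / s ^ β := by
      rw [Real.rpow_sub hs, Real.rpow_one]
    rw [this]
    field_simp
  have h1 : S + (β - 1) * (S - s) ≤ S ^ β * s ^ (1 - β) := by
    rw [← hleft, ← hright]; exact hmul
  have h2 : S ^ β * S ^ (1 - β) = S := by
    rw [← Real.rpow_add hS]; norm_num
  nlinarith [h1, h2]

/-- For `a₀ > 0`, `a₁, …, a_T ≥ 0` and `β > 1`,
`Σ_{t=1}^T aₜ / (a₀ + Σ_{i=1}^t aᵢ)^β ≤ 1 / ((β − 1) a₀^{β−1})`. -/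
theorem sum_div_pow_sum_le
    (T : ℕ) (hT : 0 < T) (a : ℕ → ℝ) (ha0 : 0 < a 0)
    (ha : ∀ i, 1 ≤ i → 0 ≤ a i) (β : ℝ) (hβ : 1 < β) :
    ∑ t ∈ Finset.Icc 1 T, a t / (∑ i ∈ Finset.range (t + 1), a i) ^ β
      ≤ 1 / ((β - 1) * a 0 ^ (β - 1)) := by
  set S : ℕ → ℝ := fun t => ∑ i ∈ Finset.range (t + 1), a i with hSdef
  have hβ0 : 0 < β - 1 := by linarith
  have hstep : ∀ t, S (t + 1) = S t + a (t + 1) := by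
    intro t; simp [hSdef, Finset.sum_range_succ]
  have hSpos : ∀ t, 0 < S t := by
    intro t
    induction t with
    | zero => simpa [hSdef] using ha0
    | succ n ih =>
      rw [hstep]
      have := ha (n + 1) (by omega)
      linarith
  have hmono : ∀ t, S t ≤ S (t + 1) := by
    intro t
    rw [hstep]
    have := ha (t + 1) (by omega)
    linarith
  have haux : ∀ n : ℕ, ∑ t ∈ Finset.Icc 1 n, a t / (S t) ^ β
      ≤ (S 0 ^ (1 - β) - S n ^ (1 - β)) / (β - 1) := by
    intro n
    induction n with
    | zero => simp
    | succ n ih =>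
      rw [Finset.sum_Icc_succ_top (by omega)]
      have hkey : a (n + 1) / S (n + 1) ^ β
          ≤ (S n ^ (1 - β) - S (n + 1) ^ (1 - β)) / (β - 1) := by
        have h := key_step (hSpos n) (hmono n) hβ
        have : S (n + 1) - S n = a (n + 1) := by
          simp [hSdef, Finset.sum_range_succ]
        rwa [this] at h
      calc _ ≤ (S 0 ^ (1 - β) - S n ^ (1 - β)) / (β - 1)
              + (S n ^ (1 - β) - S (n + 1) ^ (1 - β)) / (β - 1) :=
            add_le_add ih hkey
        _ = (S 0 ^ (1 - β) - S (n + 1) ^ (1 - β)) / (β - 1) := by ring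
  have h := haux T
  have hS0 : S 0 = a 0 := by simp [hSdef]
  have hfin : (S 0 ^ (1 - β) - S T ^ (1 - β)) / (β - 1)
      ≤ 1 / ((β - 1) * a 0 ^ (β - 1)) := by
    have hnn : 0 ≤ S T ^ (1 - β) := Real.rpow_nonneg (hSpos T).le _
    have heq : a 0 ^ (1 - β) = (a 0 ^ (β - 1))⁻¹ := by
      rw [← Real.rpow_neg ha0.le]; ring_nf
    rw [hS0, heq]
    rw [div_le_div_iff₀ hβ0 (by positivity)]
    have hpos : 0 < a 0 ^ (β - 1) := Real.rpow_pos_of_pos ha0 _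
    rw [one_mul]
    have : ((a 0 ^ (β - 1))⁻¹ - S T ^ (1 - β)) ≤ (a 0 ^ (β - 1))⁻¹ := by linarith
    calc ((a 0 ^ (β - 1))⁻¹ - S T ^ (1 - β)) * ((β - 1) * a 0 ^ (β - 1))
        ≤ (a 0 ^ (β - 1))⁻¹ * ((β - 1) * a 0 ^ (β - 1)) := by
          apply mul_le_mul_of_nonneg_right this (by positivity)
      _ = β - 1 := by field_simp
  exact h.trans hfin
end
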